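/- Let G be a hypo-efficient-domination graph possessing at least one γ-critical vertex. Then (δ(G)+1)(γ(G)−1) + 1 ≤ |V(G)| ≤ (Δ(G)+1)(γ(G)−1) + 1. -/

import Mathlib

open SimpleGraph

variable {V : Type*}

/-- `D` is a dominating set of `G`. -/
def IsDomSet (G : SimpleGraph V) (D : Finset V) : Prop :=
  ∀ v : V, ∃ u ∈ D, u = v ∨ G.Adj u v

/-- The domination number `γ(G)`. -/
noncomputable def domNum (G : SimpleGraph V) : ℕ :=
  sInf {n | ∃ D : Finset V, IsDomSet G D ∧ D.card = n}

/-- `D` is a minimum dominating set (γ-set) of `G`. -/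
def IsGammaSet (G : SimpleGraph V) (D : Finset V) : Prop :=
  IsDomSet G D ∧ D.card = domNum G

/-- The graph `G - x` obtained by deleting the vertex `x`. -/
def vdel (G : SimpleGraph V) (x : V) : SimpleGraph {u : V // u ≠ x} :=
  SimpleGraph.comap Subtype.val G

/-- `G` is a hypo-unique-domination graph: `G` has at least two γ-sets,
but `G - x` has a unique γ-set for every vertex `x`. -/
def HypoUD (G : SimpleGraph V) : Prop :=
  (∃ D₁ D₂ : Finset V, IsGammaSet G D₁ ∧ IsGammaSet G D₂ ∧ D₁ ≠ D₂) ∧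
  ∀ x : V, ∃! D : Finset {u : V // u ≠ x}, IsGammaSet (vdel G x) D

/-- `D` is an efficient dominating set of `G`: every vertex is dominated exactly once. -/
def IsEDS (G : SimpleGraph V) (D : Finset V) : Prop :=
  ∀ v : V, ∃! u : V, u ∈ D ∧ (u = v ∨ G.Adj u v)

/-- `G` is a hypo-efficient-domination graph: `G` has no EDS,
but `G - x` has an EDS for every vertex `x`. -/
def HypoED (G : SimpleGraph V) : Prop :=
  (¬ ∃ D : Finset V, IsEDS G D) ∧
  ∀ x : V, ∃ D : Finset {u : V // u ≠ x}, IsEDS (vdel G x) D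

section Helpers

lemma domNum_le {G : SimpleGraph V} {D : Finset V} (h : IsDomSet G D) :
    domNum G ≤ D.card := Nat.sInf_le ⟨D, h, rfl⟩

lemma exists_gammaSet [Fintype V] (G : SimpleGraph V) :
    ∃ D : Finset V, IsDomSet G D ∧ D.card = domNum G := by
  have hne : {n | ∃ D : Finset V, IsDomSet G D ∧ D.card = n}.Nonempty :=
    ⟨_, Finset.univ, fun v => ⟨v, Finset.mem_univ v, Or.inl rfl⟩, rfl⟩
  obtain ⟨D, hD, hc⟩ := Nat.sInf_mem hne
  exact ⟨D, hD, hc⟩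

lemma isEDS_card_le {W : Type*} {H : SimpleGraph W} {D S : Finset W}
    (hD : IsEDS H D) (hS : IsDomSet H S) : D.card ≤ S.card := by
  classical
  have key : ∀ d : W, ∃ s, s ∈ S ∧ (s = d ∨ H.Adj s d) := fun d => hS d
  refine Finset.card_le_card_of_injOn (fun d => (key d).choose)
    (fun d _ => ((key d).choose_spec).1) ?_
  intro d₁ hd₁ d₂ hd₂ heq
  have h₁ := ((key d₁).choose_spec).2
  have h₂ := ((key d₂).choose_spec).2
  have heq' : (key d₁).choose = (key d₂).choose := heq
  set s := (key d₁).choose with hs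
  rw [← heq'] at h₂
  have p₁ : d₁ ∈ D ∧ (d₁ = s ∨ H.Adj d₁ s) := ⟨hd₁, h₁.imp Eq.symm H.adj_symm⟩
  have p₂ : d₂ ∈ D ∧ (d₂ = s ∨ H.Adj d₂ s) := ⟨hd₂, h₂.imp Eq.symm H.adj_symm⟩
  exact ExistsUnique.unique (hD s) p₁ p₂

lemma isEDS_card_eq {W : Type*} [Fintype W] [DecidableEq W] {H : SimpleGraph W}
    [DecidableRel H.Adj] {D : Finset W} (hD : IsEDS H D) :
    Fintype.card W = ∑ d ∈ D, (H.degree d + 1) := by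
  classical
  have hf : ∀ w : W, ∃ u, u ∈ D ∧ (u = w ∨ H.Adj u w) := fun w => (hD w).exists
  set f : W → W := fun w => (hf w).choose with hfdef
  have hfmem : ∀ w, f w ∈ D := fun w => ((hf w).choose_spec).1
  have hfdom : ∀ w, f w = w ∨ H.Adj (f w) w := fun w => ((hf w).choose_spec).2
  have hcard : Fintype.card W = ∑ d ∈ D, (Finset.univ.filter (fun w => f w = d)).card := by
    rw [← Finset.card_univ]
    exact Finset.card_eq_sum_card_fiberwise (fun w _ => hfmem w)
  rw [hcard]
  refine Finset.sum_congr rfl fun d hd => ?_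
  have hfib : Finset.univ.filter (fun w => f w = d) = insert d (H.neighborFinset d) := by
    ext w
    simp only [Finset.mem_filter, Finset.mem_univ, true_and, Finset.mem_insert,
      mem_neighborFinset]
    constructor
    · rintro rfl
      exact (hfdom w).imp Eq.symm id
    · intro h
      have hp : d ∈ D ∧ (d = w ∨ H.Adj d w) := ⟨hd, h.imp Eq.symm id⟩
      exact ExistsUnique.unique (hD w) ⟨hfmem w, hfdom w⟩ hp
  rw [hfib, Finset.card_insert_of_notMem (by simp), degree]

end Helpers

theorem hypoED_critical_order_bounds [Fintype V] [DecidableEq V]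
    (G : SimpleGraph V) [DecidableRel G.Adj] (hED : HypoED G)
    (hx : ∃ x : V, domNum (vdel G x) < domNum G) :
    (G.minDegree + 1) * (domNum G - 1) + 1 ≤ Fintype.card V ∧
      Fintype.card V ≤ (G.maxDegree + 1) * (domNum G - 1) + 1 := by
  classical
  obtain ⟨x, hx⟩ := hx
  obtain ⟨D, hD⟩ := hED.2 x
  haveI : DecidableRel (vdel G x).Adj := fun a b =>
    inferInstanceAs (Decidable (G.Adj a.val b.val))
  -- D is a dominating set of G - x
  have hdom : IsDomSet (vdel G x) D := fun v => (hD v).exists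
  have h1 : domNum (vdel G x) ≤ D.card := domNum_le hdom
  obtain ⟨S, hS, hScard⟩ := exists_gammaSet (vdel G x)
  have h2 : D.card ≤ S.card := isEDS_card_le hD hS
  have hDcard : D.card = domNum (vdel G x) := le_antisymm (hScard ▸ h2) h1
  -- domNum G ≤ domNum (vdel G x) + 1
  have h3 : domNum G ≤ domNum (vdel G x) + 1 := by
    refine le_trans (domNum_le (D := insert x (S.image Subtype.val)) ?_) ?_
    · intro v
      by_cases hv : v = x
      · exact ⟨x, Finset.mem_insert_self _ _, Or.inl hv.symm⟩
      · obtain ⟨u, hu, hdu⟩ := hS ⟨v, hv⟩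
        exact ⟨u.val, Finset.mem_insert_of_mem (Finset.mem_image_of_mem _ hu),
          hdu.imp (congrArg Subtype.val) id⟩
    · calc (insert x (S.image Subtype.val)).card ≤ (S.image Subtype.val).card + 1 :=
            Finset.card_insert_le _ _
        _ ≤ S.card + 1 := by gcongr; exact Finset.card_image_le
        _ = domNum (vdel G x) + 1 := by rw [hScard]
  -- no vertex of D is adjacent to x
  have hnadj : ∀ d ∈ D, ¬ G.Adj d.val x := by
    intro d hd hadj
    have hds : IsDomSet G (D.image Subtype.val) := by
      intro v
      by_cases hv : v = x
      · exact ⟨d.val, Finset.mem_image_of_mem _ hd, Or.inr (hv ▸ hadj)⟩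
      · obtain ⟨u, hu, hdu⟩ := hdom ⟨v, hv⟩
        exact ⟨u.val, Finset.mem_image_of_mem _ hu, hdu.imp (congrArg Subtype.val) id⟩
    have h4 := domNum_le hds
    have h5 : (D.image Subtype.val).card ≤ D.card := Finset.card_image_le
    omega
  -- degrees are preserved
  have hdeg : ∀ d ∈ D, (vdel G x).degree d = G.degree d.val := by
    intro d hd
    unfold SimpleGraph.degree
    refine Finset.card_nbij Subtype.val (fun u hu => ?_)
      Subtype.val_injective.injOn (fun v hv => ?_)
    · rw [Finset.mem_coe, mem_neighborFinset] at hu ⊢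
      exact hu
    · simp only [Finset.mem_coe, mem_neighborFinset] at hv
      have hvx : v ≠ x := fun h => hnadj d hd (h ▸ hv)
      exact ⟨⟨v, hvx⟩, by simp only [Finset.mem_coe, mem_neighborFinset]; exact hv, rfl⟩
  -- counting
  have hcount := isEDS_card_eq hD
  rw [Finset.sum_congr rfl (fun d hd => by rw [hdeg d hd])] at hcount
  have hcV : Fintype.card {u : V // u ≠ x} = Fintype.card V - 1 := by
    simpa using Fintype.card_subtype_compl (· = x)
  have hpos : 0 < Fintype.card V := Fintype.card_pos_iff.mpr ⟨x⟩
  have hγ : D.card = domNum G - 1 := by omega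
  have hlow : D.card * (G.minDegree + 1) ≤ ∑ d ∈ D, (G.degree d.val + 1) := by
    have := Finset.card_nsmul_le_sum D (fun d => G.degree d.val + 1) (G.minDegree + 1)
      (fun d _ => Nat.add_le_add_right (G.minDegree_le_degree d.val) 1)
    simpa using this
  have hhigh : ∑ d ∈ D, (G.degree d.val + 1) ≤ D.card * (G.maxDegree + 1) := by
    have := Finset.sum_le_card_nsmul D (fun d => G.degree d.val + 1) (G.maxDegree + 1)
      (fun d _ => Nat.add_le_add_right (G.degree_le_maxDegree d.val) 1)
    simpa using this
  rw [hγ] at hlow hhigh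
  rw [mul_comm (G.minDegree + 1), mul_comm (G.maxDegree + 1)]
  omega
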